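/- Let n ≥ 1, ρ ∈ (0,1), and let A, B ⊆ {0,1}^n be nonempty. Then P_ρ(A×B) ≥ |A|·|B|·2^{−2n}·(1−ρ)^n·((1+ρ)/(1−ρ))^{n·s}, where s = h⁻¹(log|A|/n) * h⁻¹(log|B|/n). -/

import Mathlib

open Finset Asymptotics Filter
open Real

/-- Binary entropy function (base-2 logarithms). -/
noncomputable def binEnt (p : ℝ) : ℝ :=
  -(p * Real.logb 2 p) - (1 - p) * Real.logb 2 (1 - p)

/-- Inverse of the binary entropy function restricted to `[0, 1/2]`. -/
noncomputable def binEntInv (x : ℝ) : ℝ :=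
  sSup {p : ℝ | p ∈ Set.Icc (0:ℝ) (1/2) ∧ binEnt p ≤ x}

/-- `p*q = p(1-q) + q(1-p)`. -/
def pstar (p q : ℝ) : ℝ := p * (1 - q) + q * (1 - p)

/-- Probability of the rectangle `A × B` for `ρ`-correlated uniform binary strings. -/
noncomputable def Pxy (n : ℕ) (ρ : ℝ) (A B : Finset (Fin n → Bool)) : ℝ :=
  ∑ a ∈ A, ∑ b ∈ B,
    (2:ℝ)⁻¹ ^ n * ((1 + ρ)/2) ^ n * ((1 - ρ)/(1 + ρ)) ^ (hammingDist a b)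

/-- Hamming sphere of radius `j` around the all-zeros string in `{0,1}^n`. -/
def hSphere (n j : ℕ) : Finset (Fin n → Bool) :=
  Finset.univ.filter (fun x => (Finset.univ.filter (fun i => x i = true)).card = j)

/-- The exponent function `w_d(α,β)`. -/
noncomputable def wd (α β d : ℝ) : ℝ :=
  α + binEntInv α * binEnt (1/2 + (binEntInv β - d)/(2 * binEntInv α))
    + (1 - binEntInv α) * binEnt (1/2 + (d - (1 - binEntInv β))/(2 * (1 - binEntInv α)))

/-- The noise operator `T_ρ`. -/
noncomputable def Tnoise (n : ℕ) (ρ : ℝ) (f : (Fin n → Bool) → ℝ) (y : Fin n → Bool) : ℝ :=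
  ∑ x : Fin n → Bool,
    f x * ((1 + ρ)/2) ^ (n - hammingDist x y) * ((1 - ρ)/2) ^ (hammingDist x y)

/-- The normalized `p`-norm on functions on the hypercube. -/
noncomputable def pNorm (n : ℕ) (p : ℝ) (f : (Fin n → Bool) → ℝ) : ℝ :=
  ((2:ℝ)⁻¹ ^ n * ∑ x : Fin n → Bool, |f x| ^ p) ^ (1/p)

/-- Indicator function of a set `A ⊆ {0,1}^n`. -/
def indA (n : ℕ) (A : Finset (Fin n → Bool)) : (Fin n → Bool) → ℝ :=
  fun x => if x ∈ A then 1 else 0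

noncomputable def Ffun (x : ℝ) : ℝ := Real.log (1 + x) - Real.log (1 - x)

lemma Ffun_zero : Ffun 0 = 0 := by simp [Ffun]

lemma Ffun_hasDeriv {x : ℝ} (hx0 : 0 < x) (hx1 : x < 1) :
    HasDerivAt Ffun (1/(1+x) + 1/(1-x)) x := by
  have h1 : (1:ℝ) + x ≠ 0 := by linarith
  have h2 : (1:ℝ) - x ≠ 0 := by linarith
  have d1 : HasDerivAt (fun y : ℝ => Real.log (1 + y)) (1/(1+x)) x := by
    have := (Real.hasDerivAt_log h1).comp x ((hasDerivAt_id x).const_add 1)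
    simpa [Function.comp_def] using this
  have d2 : HasDerivAt (fun y : ℝ => Real.log (1 - y)) (-(1/(1-x))) x := by
    have h3 : HasDerivAt (fun y : ℝ => 1 - y) (-1) x := by
      exact (hasDerivAt_id' x).const_sub 1
    have := (Real.hasDerivAt_log h2).comp x h3
    refine this.congr_deriv ?_
    ring
  exact (d1.sub d2).congr_deriv (by ring)

lemma convexOn_Ffun {b : ℝ} (hb : b < 1) :
    ConvexOn ℝ (Set.Icc 0 b) Ffun := by
  have hint : interior (Set.Icc (0:ℝ) b) = Set.Ioo 0 b := interior_Icc
  apply MonotoneOn.convexOn_of_deriv (convex_Icc 0 b)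
  · intro x hx
    have h1 : (1:ℝ) + x ≠ 0 := by have := hx.1; linarith
    have h2 : (1:ℝ) - x ≠ 0 := by have h := hx.2; linarith
    apply ContinuousAt.continuousWithinAt
    exact ((Real.continuousAt_log h1).comp (by fun_prop)).sub
      ((Real.continuousAt_log h2).comp (by fun_prop))
  · rw [hint]
    intro x hx
    exact (Ffun_hasDeriv hx.1 (hx.2.trans hb)).differentiableAt.differentiableWithinAt
  · rw [hint]
    intro x hx y hy hxy
    rw [(Ffun_hasDeriv hx.1 (hx.2.trans hb)).deriv, (Ffun_hasDeriv hy.1 (hy.2.trans hb)).deriv]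
    have hx1 : x < 1 := hx.2.trans hb
    have hy1 : y < 1 := hy.2.trans hb
    have e1 : 1/(1+x) + 1/(1-x) = 2/(1-x^2) := by
      rw [div_add_div _ _ (by have := hx.1; linarith) (by linarith)]
      ring_nf
    have e2 : 1/(1+y) + 1/(1-y) = 2/(1-y^2) := by
      rw [div_add_div _ _ (by have := hy.1; linarith) (by linarith)]
      ring_nf
    rw [e1, e2, div_le_div_iff₀ (by nlinarith [hx.1]) (by nlinarith [hy.1])]
    nlinarith [hx.1, hy.1]

lemma Ffun_nonneg {x : ℝ} (hx0 : 0 ≤ x) (hx1 : x < 1) : 0 ≤ Ffun x := by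
  have : Real.log (1 - x) ≤ Real.log (1 + x) :=
    Real.log_le_log (by linarith) (by linarith)
  simpa [Ffun] using this

/-- slope inequality from convexity through the origin -/
lemma Ffun_div_mono {a b : ℝ} (ha : 0 < a) (hab : a ≤ b) (hb : b < 1) :
    b * Ffun a ≤ a * Ffun b := by
  rcases eq_or_lt_of_le hab with rfl | hab'
  · exact le_rfl
  · have hcvx := convexOn_Ffun hb
    have h0 : (0:ℝ) ∈ Set.Icc (0:ℝ) b := by constructor <;> linarith
    have hbmem : b ∈ Set.Icc (0:ℝ) b := by constructor <;> linarith
    have hw1 : (0:ℝ) ≤ 1 - a/b := by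
      rw [sub_nonneg, div_le_one (by linarith)]; exact hab
    have hb0 : (0:ℝ) < b := lt_trans ha hab'
    have hw2 : (0:ℝ) ≤ a/b := by positivity
    have := hcvx.2 h0 hbmem hw1 hw2 (by ring)
    have hcomb : (1 - a/b) • (0:ℝ) + (a/b) • b = a := by
      simp only [smul_eq_mul, mul_zero, zero_add]
      field_simp
    rw [hcomb] at this
    have : Ffun a ≤ (a/b) * Ffun b := by
      simpa [Ffun_zero] using this
    calc b * Ffun a ≤ b * ((a/b) * Ffun b) := by
          apply mul_le_mul_of_nonneg_left this (by linarith)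
      _ = a * Ffun b := by
          field_simp


noncomputable def gfun (t : ℝ) : ℝ := Real.binEntropy (1/2 - Real.sqrt t)

lemma Ffun_def' (x : ℝ) : Ffun x = Real.log (1 + x) - Real.log (1 - x) := rfl

lemma sqrt_lt_half {t : ℝ} (ht : t < 1/4) : Real.sqrt t < 1/2 := by
  rw [show (1:ℝ)/2 = Real.sqrt (1/4) by
    rw [show (1:ℝ)/4 = (1/2)^2 by norm_num, Real.sqrt_sq (by norm_num)]]
  rcases le_or_gt t 0 with h | h
  · rw [Real.sqrt_eq_zero'.mpr h]
    positivity
  · exact Real.sqrt_lt_sqrt h.le ht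

lemma gfun_hasDeriv {t : ℝ} (ht0 : 0 < t) (ht1 : t < 1/4) :
    HasDerivAt gfun (-(Ffun (2 * Real.sqrt t) / (2 * Real.sqrt t))) t := by
  have hr0 : 0 < Real.sqrt t := Real.sqrt_pos.mpr ht0
  set r := Real.sqrt t with hr
  have hr1 : r < 1/2 := sqrt_lt_half ht1
  have hp0 : (1:ℝ)/2 - r ≠ 0 := by linarith
  have hp1 : (1:ℝ)/2 - r ≠ 1 := by linarith
  have dsq : HasDerivAt (fun s : ℝ => 1/2 - Real.sqrt s) (-(1 / (2 * r))) t :=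
    (Real.hasDerivAt_sqrt ht0.ne').const_sub (1/2)
  have dbe := (Real.hasDerivAt_binEntropy hp0 hp1).comp t dsq
  refine dbe.congr_deriv ?_
  have h2r : (0:ℝ) < 1 - 2*r := by linarith
  have e1 : Real.log (1 - (1/2 - r)) = Real.log (1 + 2*r) - Real.log 2 := by
    rw [show (1:ℝ) - (1/2 - r) = (1 + 2*r)/2 by ring, Real.log_div (by linarith) two_ne_zero]
  have e2 : Real.log (1/2 - r) = Real.log (1 - 2*r) - Real.log 2 := by
    rw [show (1:ℝ)/2 - r = (1 - 2*r)/2 by ring, Real.log_div (by linarith) two_ne_zero]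
  rw [Ffun_def', e1, e2]
  field_simp
  ring

lemma concaveOn_gfun : ConcaveOn ℝ (Set.Icc (0:ℝ) (1/4)) gfun := by
  have hint : interior (Set.Icc (0:ℝ) (1/4)) = Set.Ioo 0 (1/4) := interior_Icc
  apply AntitoneOn.concaveOn_of_deriv (convex_Icc 0 (1/4))
  · exact (Real.binEntropy_continuous.comp
      (continuous_const.sub Real.continuous_sqrt)).continuousOn
  · rw [hint]
    intro t ht
    exact (gfun_hasDeriv ht.1 ht.2).differentiableAt.differentiableWithinAt
  · rw [hint]
    intro s hs t ht hst
    rw [(gfun_hasDeriv hs.1 hs.2).deriv, (gfun_hasDeriv ht.1 ht.2).deriv]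
    have hs0 : 0 < Real.sqrt s := Real.sqrt_pos.mpr hs.1
    have ht0 : 0 < Real.sqrt t := Real.sqrt_pos.mpr ht.1
    have hble : 2 * Real.sqrt s ≤ 2 * Real.sqrt t := by
      have := Real.sqrt_le_sqrt hst
      linarith
    have htlt : 2 * Real.sqrt t < 1 := by
      have := sqrt_lt_half ht.2
      linarith
    rw [neg_le_neg_iff, div_le_div_iff₀ (by linarith) (by linarith)]
    have := Ffun_div_mono (by linarith : (0:ℝ) < 2 * Real.sqrt s) hble htlt
    linarith


def cnt {n : ℕ} (A : Finset (Fin n → Bool)) (i : Fin n) : ℕ :=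
  (A.filter (fun a => a i = true)).card

noncomputable def freq {n : ℕ} (A : Finset (Fin n → Bool)) (i : Fin n) : ℝ :=
  (cnt A i : ℝ) / A.card

lemma freq_nonneg {n : ℕ} (A : Finset (Fin n → Bool)) (i : Fin n) : 0 ≤ freq A i := by
  unfold freq; positivity

lemma freq_le_one {n : ℕ} (A : Finset (Fin n → Bool)) (i : Fin n) : freq A i ≤ 1 := by
  unfold freq
  rcases Nat.eq_zero_or_pos A.card with h | h
  · simp [h]
  · rw [div_le_one (by positivity)]
    exact_mod_cast Finset.card_filter_le _ _

lemma log_split (ct cf : ℕ) (h : 0 < ct + cf) :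
    Real.log (ct + cf : ℕ) =
      (ct : ℝ)/(ct + cf : ℕ) * Real.log ct + (cf : ℝ)/(ct + cf : ℕ) * Real.log cf
        + Real.binEntropy ((ct : ℝ)/(ct + cf : ℕ)) := by
  have hent : ∀ p : ℝ, Real.binEntropy p = -(p * Real.log p) - (1-p) * Real.log (1-p) := by
    intro p
    rw [Real.binEntropy, Real.log_inv, Real.log_inv]; ring
  rcases Nat.eq_zero_or_pos ct with hct | hct
  · subst hct
    have hcf : (cf:ℝ) ≠ 0 := Nat.cast_ne_zero.mpr (by omega)
    simp [hent, Real.binEntropy_zero]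
    rw [div_self hcf, one_mul]
  rcases Nat.eq_zero_or_pos cf with hcf | hcf
  · subst hcf
    have : (ct : ℝ) ≠ 0 := Nat.cast_ne_zero.mpr hct.ne'
    rw [hent]
    simp [div_self this]
  · have hc : (0:ℝ) < (ct + cf : ℕ) := by exact_mod_cast h
    have hctR : (0:ℝ) < ct := by exact_mod_cast hct
    have hcfR : (0:ℝ) < cf := by exact_mod_cast hcf
    rw [hent]
    have e1 : Real.log ((ct:ℝ)/(ct+cf:ℕ)) = Real.log ct - Real.log (ct+cf:ℕ) :=
      Real.log_div hctR.ne' hc.ne'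
    have e2 : (1:ℝ) - (ct:ℝ)/(ct+cf:ℕ) = (cf:ℝ)/(ct+cf:ℕ) := by
      field_simp
      simp
    rw [e2]
    have e3 : Real.log ((cf:ℝ)/(ct+cf:ℕ)) = Real.log cf - Real.log (ct+cf:ℕ) :=
      Real.log_div hcfR.ne' hc.ne'
    rw [e1, e3]
    have e4 : (ct:ℝ)/(ct+cf:ℕ) + (cf:ℝ)/(ct+cf:ℕ) = 1 := by
      field_simp
      simp
    linear_combination -Real.log ((ct + cf : ℕ) : ℝ) * e4

def tl {n : ℕ} : (Fin (n+1) → Bool) → (Fin n → Bool) := fun a => a ∘ Fin.succ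

def slc {n : ℕ} (A : Finset (Fin (n+1) → Bool)) (b : Bool) : Finset (Fin n → Bool) :=
  (A.filter (fun a => a 0 = b)).image tl

lemma tl_injOn {n : ℕ} (A : Finset (Fin (n+1) → Bool)) (b : Bool) :
    Set.InjOn (tl (n := n)) ((A.filter (fun a => a 0 = b) : Finset (Fin (n+1) → Bool)) : Set (Fin (n+1) → Bool)) := by
  intro a ha a' ha' h
  simp only [Finset.coe_filter, Set.mem_setOf_eq] at ha ha'
  funext i
  refine Fin.cases ?_ ?_ i
  · rw [ha.2, ha'.2]
  · intro j
    exact congrFun h j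

lemma slc_card {n : ℕ} (A : Finset (Fin (n+1) → Bool)) (b : Bool) :
    (slc A b).card = (A.filter (fun a => a 0 = b)).card :=
  Finset.card_image_of_injOn (tl_injOn A b)

lemma card_split {n : ℕ} (A : Finset (Fin (n+1) → Bool)) :
    (A.filter (fun a => a 0 = true)).card + (A.filter (fun a => a 0 = false)).card = A.card := by
  have := Finset.card_filter_add_card_filter_not (s := A) (p := fun a => a 0 = true)
  simpa [Bool.not_eq_true] using this

lemma cnt_slc {n : ℕ} (A : Finset (Fin (n+1) → Bool)) (b : Bool) (i : Fin n) :
    cnt (slc A b) i = (A.filter (fun a => a 0 = b ∧ a i.succ = true)).card := by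
  unfold cnt slc
  rw [Finset.filter_image]
  rw [Finset.card_image_of_injOn ((tl_injOn A b).mono (by
    intro x hx
    simp only [Finset.coe_filter, Set.mem_setOf_eq, Finset.mem_filter] at hx ⊢
    exact ⟨hx.1.1, hx.1.2⟩))]
  rw [Finset.filter_filter]
  rfl

lemma cnt_split {n : ℕ} (A : Finset (Fin (n+1) → Bool)) (i : Fin n) :
    cnt (slc A true) i + cnt (slc A false) i = cnt A i.succ := by
  rw [cnt_slc, cnt_slc]
  unfold cnt
  have := Finset.card_filter_add_card_filter_not
    (s := A.filter (fun a => a i.succ = true)) (p := fun a => a 0 = true)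
  rw [Finset.filter_filter, Finset.filter_filter] at this
  rw [← this]
  congr 1
  · congr 1; ext a; simp [and_comm]
  · congr 1; ext a; simp [and_comm, Bool.not_eq_true]

lemma term_eq {n : ℕ} (A : Finset (Fin (n+1) → Bool)) (b : Bool) (i : Fin n) :
    ((A.filter (fun a => a 0 = b)).card : ℝ)/A.card * freq (slc A b) i
      = (cnt (slc A b) i : ℝ)/A.card := by
  unfold freq
  rw [slc_card]
  rcases Nat.eq_zero_or_pos (A.filter (fun a => a 0 = b)).card with h | h
  · have h2 : cnt (slc A b) i = 0 := by
      have := Finset.card_filter_le (slc A b) (fun a => a i = true)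
      have h3 : (slc A b).card = 0 := by rw [slc_card, h]
      have h4 : cnt (slc A b) i ≤ (slc A b).card := Finset.card_filter_le _ _
      rw [h3] at h4
      exact Nat.le_zero.mp h4
    rw [h, h2]
    simp
  · have hA0 : 0 < A.card := lt_of_lt_of_le h (Finset.card_filter_le _ _)
    generalize ((A.filter (fun a => a 0 = b)).card : ℕ) = X at *
    generalize (cnt (slc A b) i : ℕ) = C
    have hX : (X:ℝ) ≠ 0 := Nat.cast_ne_zero.mpr h.ne'
    have hA : ((A.card : ℕ):ℝ) ≠ 0 := Nat.cast_ne_zero.mpr hA0.ne'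
    field_simp

lemma freq_succ {n : ℕ} (A : Finset (Fin (n+1) → Bool)) (i : Fin n) :
    freq A i.succ =
      ((A.filter (fun a => a 0 = true)).card : ℝ)/A.card * freq (slc A true) i
      + ((A.filter (fun a => a 0 = false)).card : ℝ)/A.card * freq (slc A false) i := by
  rw [term_eq, term_eq]
  unfold freq
  rw [← add_div]
  congr 1
  rw [← Nat.cast_add, cnt_split]

lemma ent_subadd : ∀ (n : ℕ) (A : Finset (Fin n → Bool)), A.Nonempty →
    Real.log A.card ≤ ∑ i, Real.binEntropy (freq A i) := by
  intro n
  induction n with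
  | zero =>
    intro A hA
    have h1 : A.card ≤ 1 := by
      have := Finset.card_le_univ A
      simpa using this
    have h2 : 1 ≤ A.card := hA.card_pos
    have : A.card = 1 := le_antisymm h1 h2
    simp [this]
  | succ n IH =>
    intro A hA
    have hc : (0:ℝ) < A.card := by exact_mod_cast hA.card_pos
    have hcsplit : (A.filter (fun a => a 0 = true)).card
        + (A.filter (fun a => a 0 = false)).card = A.card := card_split A
    set ct := (A.filter (fun a => a 0 = true)).card with hct
    set cf := (A.filter (fun a => a 0 = false)).card with hcf
    set p := (ct : ℝ)/A.card with hp
    set q := (cf : ℝ)/A.card with hq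
    have hp0 : 0 ≤ p := by positivity
    have hq0 : 0 ≤ q := by positivity
    have hpq : p + q = 1 := by
      rw [hp, hq, ← add_div, ← Nat.cast_add, hcsplit, div_self hc.ne']
    have hfreq0 : freq A 0 = p := rfl
    have hstep1 : ∀ i : Fin n,
        p * Real.binEntropy (freq (slc A true) i) + q * Real.binEntropy (freq (slc A false) i)
          ≤ Real.binEntropy (freq A i.succ) := by
      intro i
      rw [freq_succ]
      have := (Real.strictConcave_binEntropy.concaveOn).2
        (Set.mem_Icc.mpr ⟨freq_nonneg (slc A true) i, freq_le_one (slc A true) i⟩)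
        (Set.mem_Icc.mpr ⟨freq_nonneg (slc A false) i, freq_le_one (slc A false) i⟩)
        hp0 hq0 hpq
      simpa [smul_eq_mul] using this
    have hslice : ∀ b : Bool,
        ((A.filter (fun a => a 0 = b)).card : ℝ)/A.card
            * Real.log (A.filter (fun a => a 0 = b)).card
          ≤ ((A.filter (fun a => a 0 = b)).card : ℝ)/A.card
            * ∑ i, Real.binEntropy (freq (slc A b) i) := by
      intro b
      rcases Nat.eq_zero_or_pos (A.filter (fun a => a 0 = b)).card with h | h
      · rw [h]; simp
      · apply mul_le_mul_of_nonneg_left _ (by positivity)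
        have hne : (slc A b).Nonempty := by
          rw [← Finset.card_pos, slc_card]; exact h
        have := IH (slc A b) hne
        rwa [slc_card] at this
    rw [Fin.sum_univ_succ, hfreq0]
    have hlog : Real.log A.card = p * Real.log ct + q * Real.log cf + Real.binEntropy p := by
      have h5 := log_split ct cf (by rw [hcsplit]; exact hA.card_pos)
      rw [hcsplit] at h5
      rw [h5]
    rw [hlog]
    have h1 := hslice true
    have h2 := hslice false
    rw [← hct, ← hp] at h1
    rw [← hcf, ← hq] at h2
    have h3 : ∑ i : Fin n, (p * Real.binEntropy (freq (slc A true) i)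
        + q * Real.binEntropy (freq (slc A false) i))
          ≤ ∑ i : Fin n, Real.binEntropy (freq A i.succ) :=
      Finset.sum_le_sum (fun i _ => hstep1 i)
    rw [Finset.sum_add_distrib, ← Finset.mul_sum, ← Finset.mul_sum] at h3
    linarith


lemma binEnt_eq (p : ℝ) : binEnt p = Real.binEntropy p / Real.log 2 := by
  rw [binEnt, Real.binEntropy, Real.log_inv, Real.log_inv, Real.logb, Real.logb]
  ring

lemma binEnt_zero : binEnt 0 = 0 := by
  simp [binEnt]

lemma binEntInv_mem_set {x : ℝ} (hx : 0 ≤ x) :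
    (0:ℝ) ∈ {p : ℝ | p ∈ Set.Icc (0:ℝ) (1/2) ∧ binEnt p ≤ x} := by
  refine ⟨⟨le_rfl, by norm_num⟩, ?_⟩
  rw [binEnt_zero]; exact hx

lemma binEntInv_nonneg {x : ℝ} (hx : 0 ≤ x) : 0 ≤ binEntInv x :=
  le_csSup ⟨1/2, fun p hp => hp.1.2⟩ (binEntInv_mem_set hx)

lemma binEntInv_le {x q : ℝ} (hx : 0 ≤ x) (hq : q ∈ Set.Icc (0:ℝ) (1/2))
    (hxq : x ≤ binEnt q) : binEntInv x ≤ q := by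
  apply csSup_le ⟨0, binEntInv_mem_set hx⟩
  intro p hp
  obtain ⟨hpI, hpx⟩ := hp
  by_contra hlt
  push_neg at hlt
  have hmono := Real.binEntropy_strictMonoOn
    (a := q) (b := p)
    (by constructor <;> [exact hq.1; simpa using hq.2])
    (by constructor <;> [exact hpI.1; simpa using hpI.2]) hlt
  have h2 : binEnt q < binEnt p := by
    rw [binEnt_eq, binEnt_eq]
    exact div_lt_div_of_pos_right hmono (Real.log_pos (by norm_num))
  linarith

lemma binEntInv_le_half {x : ℝ} (hx : 0 ≤ x) : binEntInv x ≤ 1/2 :=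
  csSup_le ⟨0, binEntInv_mem_set hx⟩ (fun p hp => hp.1.2)

lemma keyL {n : ℕ} (hn : 1 ≤ n) (A : Finset (Fin n → Bool)) (hA : A.Nonempty) :
    ∑ i, (freq A i - 1/2)^2 ≤ n * (1/2 - binEntInv (Real.logb 2 A.card / n))^2 := by
  have hn0 : (0:ℝ) < n := by exact_mod_cast hn
  have hcard1 : (1:ℝ) ≤ A.card := by exact_mod_cast hA.card_pos
  set x := Real.logb 2 A.card / n with hxdef
  have hx0 : 0 ≤ x := div_nonneg (Real.logb_nonneg (by norm_num) hcard1) hn0.le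
  set m := (∑ i, (freq A i - 1/2)^2) / (n:ℝ) with hmdef
  have hui : ∀ i : Fin n, (freq A i - 1/2)^2 ∈ Set.Icc (0:ℝ) (1/4) := by
    intro i
    constructor
    · positivity
    · nlinarith [freq_nonneg A i, freq_le_one A i]
  have hm0 : 0 ≤ m := by
    apply div_nonneg _ hn0.le
    exact Finset.sum_nonneg (fun i _ => (hui i).1)
  have hm14 : m ≤ 1/4 := by
    rw [hmdef, div_le_iff₀ hn0]
    calc ∑ i, (freq A i - 1/2)^2 ≤ ∑ _i : Fin n, (1/4 : ℝ) :=
          Finset.sum_le_sum (fun i _ => (hui i).2)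
      _ = n * (1/4) := by simp [Finset.card_univ, mul_comm]
      _ = 1/4 * n := by ring
  -- Jensen for gfun
  have hw1 : ∑ _i : Fin n, (1/(n:ℝ)) = 1 := by
    simp [Finset.card_univ]
    field_simp
  have hJ := concaveOn_gfun.le_map_sum (t := Finset.univ)
    (w := fun _ : Fin n => 1/(n:ℝ)) (p := fun i => (freq A i - 1/2)^2)
    (fun i _ => by positivity) hw1 (fun i _ => hui i)
  simp only [smul_eq_mul] at hJ
  have hcomb : ∑ i : Fin n, (1/(n:ℝ)) * ((freq A i - 1/2)^2) = m := by
    rw [hmdef, Finset.sum_div]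
    apply Finset.sum_congr rfl
    intro i _
    ring
  rw [hcomb] at hJ
  -- subadditivity
  have hsub := ent_subadd n A hA
  have hgi : ∀ i : Fin n, gfun ((freq A i - 1/2)^2) = Real.binEntropy (freq A i) := by
    intro i
    rw [gfun, Real.sqrt_sq_eq_abs]
    rcases abs_cases (freq A i - 1/2) with ⟨h, _⟩ | ⟨h, _⟩
    · rw [h, show (1:ℝ)/2 - (freq A i - 1/2) = 1 - freq A i by ring,
        Real.binEntropy_one_sub]
    · rw [h]
      congr 1
      ring
  have hsum_eq : ∑ i : Fin n, 1/(n:ℝ) * gfun ((freq A i - 1/2)^2)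
      = (∑ i, Real.binEntropy (freq A i)) / n := by
    rw [Finset.sum_div]
    apply Finset.sum_congr rfl
    intro i _
    rw [hgi i]
    ring
  rw [hsum_eq] at hJ
  -- so x ≤ binEnt (1/2 - √m)
  have hlog2 : (0:ℝ) < Real.log 2 := Real.log_pos (by norm_num)
  have hxle : x ≤ binEnt (1/2 - Real.sqrt m) := by
    have h2 : Real.log A.card / n ≤ Real.binEntropy (1/2 - Real.sqrt m) := by
      calc Real.log A.card / n ≤ (∑ i, Real.binEntropy (freq A i)) / n :=
            (div_le_div_iff_of_pos_right hn0).mpr hsub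
        _ ≤ Real.binEntropy (1/2 - Real.sqrt m) := hJ
    rw [binEnt_eq, hxdef, Real.logb, div_right_comm]
    exact (div_le_div_iff_of_pos_right hlog2).mpr h2
  have hsq : Real.sqrt m ≤ 1/2 := by
    have := Real.sqrt_le_sqrt hm14
    calc Real.sqrt m ≤ Real.sqrt (1/4) := this
      _ = 1/2 := by
        rw [show (1:ℝ)/4 = (1/2)^2 by norm_num, Real.sqrt_sq (by norm_num)]
  have halpha : binEntInv x ≤ 1/2 - Real.sqrt m :=
    binEntInv_le hx0 ⟨by linarith [Real.sqrt_nonneg m], by linarith [Real.sqrt_nonneg m]⟩ hxle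
  have hfin : m ≤ (1/2 - binEntInv x)^2 := by
    have h1 : Real.sqrt m ≤ 1/2 - binEntInv x := by linarith
    have h2 : Real.sqrt m ^ 2 ≤ (1/2 - binEntInv x)^2 :=
      pow_le_pow_left₀ (Real.sqrt_nonneg m) h1 2
    rwa [Real.sq_sqrt hm0] at h2
  calc ∑ i, (freq A i - 1/2)^2 = n * m := by
        rw [hmdef]
        field_simp
        ring_nf
    _ ≤ n * (1/2 - binEntInv x)^2 := by
        apply mul_le_mul_of_nonneg_left hfin hn0.le

lemma cs_bound {n : ℕ} (u v : Fin n → ℝ) (U V : ℝ) (hU : 0 ≤ U) (hV : 0 ≤ V)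
    (hu : ∑ i, u i ^ 2 ≤ n * U^2) (hv : ∑ i, v i ^ 2 ≤ n * V^2) :
    ∑ i, |u i| * |v i| ≤ n * (U * V) := by
  have hcs := Finset.sum_mul_sq_le_sq_mul_sq Finset.univ (fun i => |u i|) (fun i => |v i|)
  simp only [sq_abs] at hcs
  have h1 : 0 ≤ ∑ i, |u i| * |v i| :=
    Finset.sum_nonneg (fun i _ => mul_nonneg (abs_nonneg _) (abs_nonneg _))
  have h2 : 0 ≤ ∑ i, v i ^ 2 := Finset.sum_nonneg (fun i _ => sq_nonneg _)
  have h3 : 0 ≤ ∑ i, u i ^ 2 := Finset.sum_nonneg (fun i _ => sq_nonneg _)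
  have h4 : (∑ i, u i ^ 2) * (∑ i, v i ^ 2) ≤ (n * U^2) * (n * V^2) :=
    mul_le_mul hu hv h2 (by positivity)
  have h5 : (∑ i, |u i| * |v i|)^2 ≤ ((n:ℝ) * (U * V))^2 := by
    calc (∑ i, |u i| * |v i|)^2 ≤ (∑ i, u i ^ 2) * (∑ i, v i ^ 2) := hcs
      _ ≤ (n * U^2) * (n * V^2) := h4
      _ = ((n:ℝ) * (U * V))^2 := by ring
  have h6 : (0:ℝ) ≤ (n:ℝ) * (U * V) := by positivity
  nlinarith [h5, h1, h6]

lemma count_sum {n : ℕ} (A : Finset (Fin n → Bool)) (i : Fin n) :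
    ∑ a ∈ A, (if a i = true then (1:ℝ) else 0) = cnt A i := by
  rw [Finset.sum_boole]
  rfl

lemma count_sum' {n : ℕ} (A : Finset (Fin n → Bool)) (i : Fin n) :
    ∑ a ∈ A, (if a i = true then (0:ℝ) else 1) = A.card - cnt A i := by
  have : ∀ a : Fin n → Bool, (if a i = true then (0:ℝ) else 1)
      = 1 - (if a i = true then (1:ℝ) else 0) := by
    intro a; by_cases h : a i = true <;> simp [h]
  rw [Finset.sum_congr rfl (fun a _ => this a), Finset.sum_sub_distrib, count_sum]
  simp

lemma hamming_sum {n : ℕ} (A B : Finset (Fin n → Bool)) :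
    ∑ a ∈ A, ∑ b ∈ B, (hammingDist a b : ℝ)
      = ∑ i : Fin n, ((cnt A i : ℝ) * (B.card - cnt B i) + ((A.card : ℝ) - cnt A i) * cnt B i) := by
  have hd : ∀ a b : Fin n → Bool, (hammingDist a b : ℝ)
      = ∑ i : Fin n, (if a i ≠ b i then (1:ℝ) else 0) := by
    intro a b
    rw [hammingDist]
    rw [Finset.natCast_card_filter]
  have hsplit : ∀ a b : Fin n → Bool, ∀ i : Fin n, (if a i ≠ b i then (1:ℝ) else 0)
      = (if a i = true then (1:ℝ) else 0) * (if b i = true then (0:ℝ) else 1)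
        + (if a i = true then (0:ℝ) else 1) * (if b i = true then (1:ℝ) else 0) := by
    intro a b i
    cases h1 : a i <;> cases h2 : b i <;> simp
  calc ∑ a ∈ A, ∑ b ∈ B, (hammingDist a b : ℝ)
      = ∑ a ∈ A, ∑ b ∈ B, ∑ i : Fin n, (if a i ≠ b i then (1:ℝ) else 0) := by
        apply Finset.sum_congr rfl; intro a _
        apply Finset.sum_congr rfl; intro b _
        exact hd a b
    _ = ∑ a ∈ A, ∑ i : Fin n, ∑ b ∈ B, (if a i ≠ b i then (1:ℝ) else 0) := by
        apply Finset.sum_congr rfl; intro a _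
        exact Finset.sum_comm
    _ = ∑ i : Fin n, ∑ a ∈ A, ∑ b ∈ B, (if a i ≠ b i then (1:ℝ) else 0) :=
        Finset.sum_comm
    _ = ∑ i : Fin n, ((cnt A i : ℝ) * (B.card - cnt B i) + ((A.card : ℝ) - cnt A i) * cnt B i) := by
        apply Finset.sum_congr rfl; intro i _
        calc ∑ a ∈ A, ∑ b ∈ B, (if a i ≠ b i then (1:ℝ) else 0)
            = ∑ a ∈ A, ∑ b ∈ B, ((if a i = true then (1:ℝ) else 0) * (if b i = true then (0:ℝ) else 1)
              + (if a i = true then (0:ℝ) else 1) * (if b i = true then (1:ℝ) else 0)) := by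
              apply Finset.sum_congr rfl; intro a _
              apply Finset.sum_congr rfl; intro b _
              exact hsplit a b i
          _ = (∑ a ∈ A, (if a i = true then (1:ℝ) else 0)) * (∑ b ∈ B, (if b i = true then (0:ℝ) else 1))
              + (∑ a ∈ A, (if a i = true then (0:ℝ) else 1)) * (∑ b ∈ B, (if b i = true then (1:ℝ) else 0)) := by
              rw [Finset.sum_mul_sum, Finset.sum_mul_sum, ← Finset.sum_add_distrib]
              apply Finset.sum_congr rfl; intro a _
              rw [← Finset.sum_add_distrib]
          _ = (cnt A i : ℝ) * (B.card - cnt B i) + ((A.card : ℝ) - cnt A i) * cnt B i := by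
              rw [count_sum, count_sum', count_sum, count_sum']

lemma exp_jensen {γ : Type*} (t : Finset γ) (ht : t.Nonempty) (f : γ → ℝ) :
    (t.card : ℝ) * Real.exp ((∑ x ∈ t, f x) / t.card) ≤ ∑ x ∈ t, Real.exp (f x) := by
  have hc : (0:ℝ) < t.card := by exact_mod_cast ht.card_pos
  have hJ := convexOn_exp.map_sum_le (t := t) (w := fun _ => 1/(t.card:ℝ)) (p := f)
    (fun i _ => by positivity) (by rw [Finset.sum_const, nsmul_eq_mul, mul_one_div, div_self hc.ne']) (fun i _ => Set.mem_univ _)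
  simp only [smul_eq_mul] at hJ
  have e1 : ∑ i ∈ t, 1/(t.card:ℝ) * f i = (∑ x ∈ t, f x) / t.card := by
    rw [Finset.sum_div]; apply Finset.sum_congr rfl; intro i _; ring
  have e2 : ∑ i ∈ t, 1/(t.card:ℝ) * Real.exp (f i)
      = (∑ x ∈ t, Real.exp (f x)) / t.card := by
    rw [Finset.sum_div]; apply Finset.sum_congr rfl; intro i _; ring
  rw [e1, e2] at hJ
  calc (t.card : ℝ) * Real.exp ((∑ x ∈ t, f x) / t.card)
      ≤ (t.card : ℝ) * ((∑ x ∈ t, Real.exp (f x)) / t.card) :=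
        mul_le_mul_of_nonneg_left hJ hc.le
    _ = ∑ x ∈ t, Real.exp (f x) := by field_simp

lemma pstar_sum_bound {n : ℕ} (hn : 1 ≤ n) (A B : Finset (Fin n → Bool))
    (hA : A.Nonempty) (hB : B.Nonempty) :
    ∑ i : Fin n, pstar (freq A i) (freq B i)
      ≤ n * (1 - pstar (binEntInv (Real.logb 2 A.card / n))
          (binEntInv (Real.logb 2 B.card / n))) := by
  have hn0 : (0:ℝ) < n := by exact_mod_cast hn
  set α := binEntInv (Real.logb 2 A.card / n) with hα
  set β := binEntInv (Real.logb 2 B.card / n) with hβ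
  have hxA : (0:ℝ) ≤ Real.logb 2 A.card / n :=
    div_nonneg (Real.logb_nonneg (by norm_num) (by exact_mod_cast hA.card_pos)) hn0.le
  have hxB : (0:ℝ) ≤ Real.logb 2 B.card / n :=
    div_nonneg (Real.logb_nonneg (by norm_num) (by exact_mod_cast hB.card_pos)) hn0.le
  have hU : 0 ≤ 1/2 - α := by
    have := binEntInv_le_half hxA; linarith
  have hV : 0 ≤ 1/2 - β := by
    have := binEntInv_le_half hxB; linarith
  have hcs := cs_bound (fun i => freq A i - 1/2) (fun i => freq B i - 1/2)
    (1/2 - α) (1/2 - β) hU hV (keyL hn A hA) (keyL hn B hB)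
  have hstep : ∀ i : Fin n, pstar (freq A i) (freq B i)
      ≤ 1/2 + 2 * (|freq A i - 1/2| * |freq B i - 1/2|) := by
    intro i
    have habs : -((freq A i - 1/2) * (freq B i - 1/2))
        ≤ |freq A i - 1/2| * |freq B i - 1/2| := by
      rw [← abs_mul]
      exact neg_le_abs _
    unfold pstar
    nlinarith [habs]
  calc ∑ i : Fin n, pstar (freq A i) (freq B i)
      ≤ ∑ i : Fin n, (1/2 + 2 * (|freq A i - 1/2| * |freq B i - 1/2|)) :=
        Finset.sum_le_sum (fun i _ => hstep i)
    _ = n * (1/2) + 2 * ∑ i : Fin n, |freq A i - 1/2| * |freq B i - 1/2| := by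
        rw [Finset.sum_add_distrib, ← Finset.mul_sum]
        simp [Finset.card_univ]
    _ ≤ n * (1/2) + 2 * (n * ((1/2 - α) * (1/2 - β))) := by linarith [hcs]
    _ = n * (1 - pstar α β) := by unfold pstar; ring


/-- lower bound on `P_ρ(A×B)` in terms of set sizes. -/
theorem stmt_18 (n : ℕ) (hn : 1 ≤ n) (ρ : ℝ) (hρ : ρ ∈ Set.Ioo (0:ℝ) 1)
    (A B : Finset (Fin n → Bool)) (hA : A.Nonempty) (hB : B.Nonempty) :
    Pxy n ρ A B ≥ (A.card : ℝ) * B.card * (2:ℝ)⁻¹ ^ (2*n) * (1 - ρ) ^ n *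
      ((1 + ρ)/(1 - ρ)) ^
        ((n:ℝ) * pstar (binEntInv (Real.logb 2 A.card / n))
                       (binEntInv (Real.logb 2 B.card / n))) := by
  obtain ⟨hρ0, hρ1⟩ := hρ
  have h1ρ : (0:ℝ) < 1 - ρ := by linarith
  have h1ρ' : (0:ℝ) < 1 + ρ := by linarith
  set c := (1 - ρ)/(1 + ρ) with hc
  have hc0 : 0 < c := by positivity
  have hc1 : c < 1 := by rw [hc, div_lt_one h1ρ']; linarith
  have hlogc : Real.log c < 0 := Real.log_neg hc0 hc1
  set α := binEntInv (Real.logb 2 A.card / n) with hα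
  set β := binEntInv (Real.logb 2 B.card / n) with hβ
  set s := pstar α β with hs
  have hn0 : (0:ℝ) < n := by exact_mod_cast hn
  have hNA : (0:ℝ) < A.card := by exact_mod_cast hA.card_pos
  have hNB : (0:ℝ) < B.card := by exact_mod_cast hB.card_pos
  set N := (A.card : ℝ) * B.card with hN
  have hN0 : 0 < N := by positivity
  set D := ∑ a ∈ A, ∑ b ∈ B, (hammingDist a b : ℝ) with hD
  -- distance bound
  have hDle : D ≤ N * (n * (1 - s)) := by
    rw [hD, hamming_sum]
    have hterm : ∀ i : Fin n, (cnt A i : ℝ) * (B.card - cnt B i)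
        + ((A.card : ℝ) - cnt A i) * cnt B i = N * pstar (freq A i) (freq B i) := by
      intro i
      unfold pstar freq
      field_simp
      ring
    rw [Finset.sum_congr rfl (fun i _ => hterm i), ← Finset.mul_sum]
    exact mul_le_mul_of_nonneg_left (pstar_sum_bound hn A B hA hB) hN0.le
  -- Jensen on exp over pairs
  set t := A ×ˢ B with ht
  have htcard : (t.card : ℝ) = N := by
    rw [ht, Finset.card_product]
    push_cast
    rfl
  have htne : t.Nonempty := hA.product hB
  have hJ := exp_jensen t htne (fun p => (hammingDist p.1 p.2 : ℝ) * Real.log c)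
  have hsum1 : ∑ p ∈ t, (hammingDist p.1 p.2 : ℝ) * Real.log c = D * Real.log c := by
    rw [ht, Finset.sum_product, hD, Finset.sum_mul]
    apply Finset.sum_congr rfl; intro a _
    rw [Finset.sum_mul]
  have hsum2 : ∑ p ∈ t, Real.exp ((hammingDist p.1 p.2 : ℝ) * Real.log c)
      = ∑ a ∈ A, ∑ b ∈ B, c ^ (hammingDist a b) := by
    rw [ht, Finset.sum_product]
    apply Finset.sum_congr rfl; intro a _
    apply Finset.sum_congr rfl; intro b _
    rw [Real.exp_nat_mul, Real.exp_log hc0]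
  rw [hsum1, hsum2, htcard] at hJ
  -- monotonicity in the exponent
  have hmono : (n * (1 - s)) * Real.log c ≤ D * Real.log c / N := by
    rw [div_eq_mul_inv, mul_comm (D * Real.log c)]
    rw [show (D * Real.log c) = D * Real.log c by rfl]
    have h1 : D / N ≤ n * (1 - s) := by
      rw [div_le_iff₀ hN0, mul_comm]
      exact hDle
    calc (n * (1 - s)) * Real.log c ≤ (D / N) * Real.log c :=
          mul_le_mul_of_nonpos_right h1 hlogc.le
      _ = N⁻¹ * (D * Real.log c) := by ring
  have hexp : N * Real.exp ((n * (1 - s)) * Real.log c) ≤ N * Real.exp (D * Real.log c / N) :=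
    mul_le_mul_of_nonneg_left (Real.exp_le_exp.mpr hmono) hN0.le
  -- the sum lower bound
  have hsumlb : N * Real.exp ((n * (1 - s)) * Real.log c)
      ≤ ∑ a ∈ A, ∑ b ∈ B, c ^ (hammingDist a b) := le_trans hexp hJ
  -- rewrite exp as rpow
  have hrpow : Real.exp ((n * (1 - s)) * Real.log c) = c ^ ((n:ℝ) * (1 - s)) := by
    rw [Real.rpow_def_of_pos hc0, mul_comm]
  -- algebraic identity for the constants
  have halg : (2:ℝ)⁻¹ ^ n * ((1 + ρ)/2) ^ n * (N * (c ^ ((n:ℝ) * (1 - s))))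
      = N * ((2:ℝ)⁻¹ ^ (2*n) * (1 - ρ) ^ n * ((1 + ρ)/(1 - ρ)) ^ ((n:ℝ) * s)) := by
    have e1 : c ^ ((n:ℝ) * (1 - s)) = c ^ (n:ℝ) * (c ^ ((n:ℝ) * s))⁻¹ := by
      rw [show (n:ℝ) * (1 - s) = (n:ℝ) + (-((n:ℝ) * s)) by ring,
        Real.rpow_add hc0, Real.rpow_neg hc0.le]
    have e2 : ((1 + ρ)/(1 - ρ)) ^ ((n:ℝ) * s) = (c ^ ((n:ℝ) * s))⁻¹ := by
      rw [show (1 + ρ)/(1 - ρ) = c⁻¹ by rw [hc, inv_div], Real.inv_rpow hc0.le]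
    have e3 : c ^ (n:ℝ) = c ^ n := Real.rpow_natCast c n
    have hmul : (2:ℝ)⁻¹ * ((1 + ρ)/2) * c = ((2:ℝ)⁻¹ * 2⁻¹) * (1 - ρ) := by
      rw [hc]
      field_simp
    have e4 : (2:ℝ)⁻¹ ^ n * ((1 + ρ)/2) ^ n * c ^ n = (2:ℝ)⁻¹ ^ (2*n) * (1 - ρ) ^ n := by
      rw [← mul_pow, ← mul_pow, hmul, mul_pow, ← pow_two, ← pow_mul]
    rw [e1, e2, e3]
    calc (2:ℝ)⁻¹ ^ n * ((1 + ρ)/2) ^ n * (N * (c ^ n * (c ^ ((n:ℝ) * s))⁻¹))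
        = ((2:ℝ)⁻¹ ^ n * ((1 + ρ)/2) ^ n * c ^ n) * N * (c ^ ((n:ℝ) * s))⁻¹ := by ring
      _ = ((2:ℝ)⁻¹ ^ (2*n) * (1 - ρ) ^ n) * N * (c ^ ((n:ℝ) * s))⁻¹ := by rw [e4]
      _ = N * ((2:ℝ)⁻¹ ^ (2*n) * (1 - ρ) ^ n * (c ^ ((n:ℝ) * s))⁻¹) := by ring
  -- put it together
  have hPxy : Pxy n ρ A B
      = (2:ℝ)⁻¹ ^ n * ((1 + ρ)/2) ^ n * ∑ a ∈ A, ∑ b ∈ B, c ^ (hammingDist a b) := by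
    rw [Pxy, Finset.mul_sum]
    apply Finset.sum_congr rfl; intro a _
    rw [Finset.mul_sum]
  have hK : (0:ℝ) < (2:ℝ)⁻¹ ^ n * ((1 + ρ)/2) ^ n := by positivity
  rw [ge_iff_le, hPxy]
  calc (A.card : ℝ) * B.card * (2:ℝ)⁻¹ ^ (2*n) * (1 - ρ) ^ n
        * ((1 + ρ)/(1 - ρ)) ^ ((n:ℝ) * s)
      = N * ((2:ℝ)⁻¹ ^ (2*n) * (1 - ρ) ^ n * ((1 + ρ)/(1 - ρ)) ^ ((n:ℝ) * s)) := by
        rw [hN]; ring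
    _ = (2:ℝ)⁻¹ ^ n * ((1 + ρ)/2) ^ n * (N * (c ^ ((n:ℝ) * (1 - s)))) := halg.symm
    _ = (2:ℝ)⁻¹ ^ n * ((1 + ρ)/2) ^ n * (N * Real.exp ((n * (1 - s)) * Real.log c)) := by
        rw [hrpow]
    _ ≤ (2:ℝ)⁻¹ ^ n * ((1 + ρ)/2) ^ n * ∑ a ∈ A, ∑ b ∈ B, c ^ (hammingDist a b) :=
        mul_le_mul_of_nonneg_left hsumlb hK.le
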